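/- Let Z be an abelian group, Δ ⊆ Z and D ⊆ Z finite sets, T ≥ 1 a real number, and P ⊆ D×D a set of pairs such that |Δ[x] ∩ Δ[y]| ≥ T for every (x,y) ∈ P. Then |P|² ≤ E_4(D) · |{z ∈ Z : |Δ ∩ (z+Δ)| ≥ T}|. (Note the set {z ∈ Z : |Δ ∩ (z+Δ)| ≥ T} is finite since T ≥ 1.) -/

import Mathlib

open scoped Pointwise

/-- The additive energy `E₄(A)`: the number of quadruples
`(a₁,a₂,a₃,a₄) ∈ A⁴` with `a₁ + a₂ = a₃ + a₄`. -/
def E4 {Z : Type*} [AddCommGroup Z] [DecidableEq Z] (A : Finset Z) : ℕ :=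
  ((A ×ˢ A ×ˢ A ×ˢ A).filter fun p => p.1 + p.2.1 = p.2.2.1 + p.2.2.2).card

/-- If `|Δ[x] ∩ Δ[y]| ≥ T` for every pair `(x,y) ∈ P ⊆ D×D`, then
`|P|² ≤ E₄(D) · |{z : |Δ ∩ (z+Δ)| ≥ T}|`.  Since `T ≥ 1` every such `z` lies
in `Δ − Δ`, so the set of such `z` is the corresponding finite set. -/
theorem card_pairs_sq_le {Z : Type*} [AddCommGroup Z] [DecidableEq Z]
    (Δ D : Finset Z) (T : ℝ) (hT : 1 ≤ T) (P : Finset (Z × Z)) (hP : P ⊆ D ×ˢ D)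
    (hPT : ∀ p ∈ P,
      T ≤ (((Δ ∩ Δ.image (p.1 + ·)) ∩ (Δ ∩ Δ.image (p.2 + ·))).card : ℝ)) :
    (P.card : ℝ) ^ 2
      ≤ (E4 D : ℝ) *
        (((Δ - Δ).filter fun z => T ≤ ((Δ ∩ Δ.image (z + ·)).card : ℝ)).card : ℝ) := by
  classical
  set S : Finset Z := (Δ - Δ).filter fun z => T ≤ ((Δ ∩ Δ.image (z + ·)).card : ℝ) with hS
  -- every pair in P maps to S via subtraction
  have hmem : ∀ p ∈ P, p.1 - p.2 ∈ S := by
    intro p hp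
    obtain ⟨x, y⟩ := p
    have hB := hPT _ hp
    simp only at hB ⊢
    -- card bound via translation by -y
    have hcard : ((Δ ∩ Δ.image (x + ·)) ∩ (Δ ∩ Δ.image (y + ·))).card
        ≤ (Δ ∩ Δ.image ((x - y) + ·)).card := by
      apply Finset.card_le_card_of_injOn (fun t => t - y)
      · intro t ht
        simp only [Finset.mem_coe, Finset.mem_inter, Finset.mem_image] at ht ⊢
        obtain ⟨⟨htΔ, δ, hδΔ, hδ⟩, _, δ', hδ'Δ, hδ'⟩ := ht
        constructor
        · have : t - y = δ' := by rw [← hδ']; abel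
          rw [this]; exact hδ'Δ
        · exact ⟨δ, hδΔ, by rw [← hδ]; abel⟩
      · intro a _ b _ h
        simpa using sub_left_injective h
    have hT2 : T ≤ ((Δ ∩ Δ.image ((x - y) + ·)).card : ℝ) :=
      le_trans hB (by exact_mod_cast hcard)
    have hne : (Δ ∩ Δ.image ((x - y) + ·)).Nonempty := by
      rw [← Finset.card_pos]
      by_contra h
      push_neg at h
      interval_cases h' : (Δ ∩ Δ.image ((x - y) + ·)).card
      · simp [h'] at hT2; linarith
    obtain ⟨a, ha⟩ := hne
    simp only [Finset.mem_inter, Finset.mem_image] at ha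
    obtain ⟨haΔ, δ, hδΔ, hδ⟩ := ha
    rw [hS, Finset.mem_filter]
    refine ⟨?_, hT2⟩
    rw [Finset.mem_sub]
    exact ⟨a, haΔ, δ, hδΔ, by rw [← hδ]; abel⟩
  set r : Z → ℕ := fun z => (P.filter fun p => p.1 - p.2 = z).card with hr
  have hPsum : P.card = ∑ z ∈ S, r z :=
    Finset.card_eq_sum_card_fiberwise hmem
  -- sum of squares bounded by energy
  set Q : Finset ((Z × Z) × (Z × Z)) :=
    (P ×ˢ P).filter fun q => q.1.1 - q.1.2 = q.2.1 - q.2.2 with hQdef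
  have hQsum : ∑ z ∈ S, r z ^ 2 = Q.card := by
    have : Q.card = ∑ z ∈ S, (Q.filter fun q => q.1.1 - q.1.2 = z).card :=
      Finset.card_eq_sum_card_fiberwise (by
        intro q hq
        rw [hQdef, Finset.mem_coe, Finset.mem_filter, Finset.mem_product] at hq
        exact hmem _ hq.1.1)
    rw [this]
    apply Finset.sum_congr rfl
    intro z hz
    have hfib : Q.filter (fun q => q.1.1 - q.1.2 = z)
        = (P.filter fun p => p.1 - p.2 = z) ×ˢ (P.filter fun p => p.1 - p.2 = z) := by
      ext ⟨p, q⟩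
      simp only [hQdef, Finset.mem_filter, Finset.mem_product]
      constructor
      · rintro ⟨⟨⟨h1, h2⟩, h3⟩, h4⟩
        exact ⟨⟨h1, h4⟩, h2, by rw [← h3]; exact h4⟩
      · rintro ⟨⟨h1, h2⟩, h3, h4⟩
        exact ⟨⟨⟨h1, h3⟩, by rw [h2, h4]⟩, h2⟩
    rw [hfib, Finset.card_product, hr, sq]
  have hQE : Q.card ≤ E4 D := by
    apply Finset.card_le_card_of_injOn
      (fun q => (q.1.1, q.2.2, q.2.1, q.1.2))
    · intro q hq
      rw [hQdef, Finset.mem_coe, Finset.mem_filter, Finset.mem_product] at hq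
      obtain ⟨⟨hq1, hq2⟩, heq⟩ := hq
      have h1 := hP hq1
      have h2 := hP hq2
      rw [Finset.mem_product] at h1 h2
      simp only [E4, Finset.mem_coe, Finset.mem_filter, Finset.mem_product]
      refine ⟨⟨h1.1, h2.2, h2.1, h1.2⟩, ?_⟩
      have := sub_eq_sub_iff_add_eq_add.mp heq
      simpa [add_comm] using this
    · intro a _ b _ h
      simp only [Prod.mk.injEq] at h
      obtain ⟨h1, h2, h3, h4⟩ := h
      exact Prod.ext (Prod.ext h1 h4) (Prod.ext h3 h2)
  -- Cauchy–Schwarz and finish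
  have hCS : ((∑ z ∈ S, r z : ℕ) : ℝ) ^ 2 ≤ (S.card : ℝ) * ∑ z ∈ S, ((r z : ℝ)) ^ 2 := by
    push_cast
    exact sq_sum_le_card_mul_sum_sq
  have hsq : ∑ z ∈ S, ((r z : ℝ)) ^ 2 ≤ (E4 D : ℝ) := by
    have : ((∑ z ∈ S, r z ^ 2 : ℕ) : ℝ) ≤ (E4 D : ℝ) := by
      exact_mod_cast hQsum ▸ hQE
    push_cast at this
    exact this
  calc (P.card : ℝ) ^ 2 = ((∑ z ∈ S, r z : ℕ) : ℝ) ^ 2 := by rw [hPsum]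
    _ ≤ (S.card : ℝ) * ∑ z ∈ S, ((r z : ℝ)) ^ 2 := hCS
    _ ≤ (S.card : ℝ) * (E4 D : ℝ) := by
        apply mul_le_mul_of_nonneg_left hsq (by positivity)
    _ = (E4 D : ℝ) * (S.card : ℝ) := mul_comm _ _
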